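/- Suppose d_i ≥ h_i for all i ∈ {1,…,n}, and suppose R contains an element ∂ with degD ∂ = 1. Then there exists a solution T ∈ R^{n×n} for (d_1,…,d_n); moreover T can be chosen so that degD T_{ij} ≤ (n−1)·d + max_i (d_i − h_i) for all i, j. -/

import Mathlib

set_option linter.unusedSectionVars false
set_option maxHeartbeats 1600000
set_option synthInstance.maxHeartbeats 1000000


section WB
lemma wb_le_coe_cases (x : WithBot ℕ) : x = ⊥ ∨ ∃ a : ℕ, x = (a : WithBot ℕ) := by
  induction x using WithBot.recBotCoe with
  | bot => exact Or.inl rfl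
  | coe a => exact Or.inr ⟨a, by exact_mod_cast rfl⟩

lemma wb_cancel {x : WithBot ℕ} {a b : ℕ} (h : x + (a : WithBot ℕ) ≤ (b : WithBot ℕ)) :
    x ≤ ((b - a : ℕ) : WithBot ℕ) := by
  rcases wb_le_coe_cases x with rfl | ⟨c, rfl⟩
  · exact bot_le
  · have h' : c + a ≤ b := by exact_mod_cast h
    exact_mod_cast Nat.le_sub_of_add_le h'

lemma wb_add_le {x y : WithBot ℕ} {b c : ℕ} (hx : x ≤ (b : WithBot ℕ)) (hy : y ≤ (c : WithBot ℕ)) :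
    x + y ≤ ((b + c : ℕ) : WithBot ℕ) := by
  have : ((b + c : ℕ) : WithBot ℕ) = (b : WithBot ℕ) + (c : WithBot ℕ) := by exact_mod_cast rfl
  rw [this]; exact add_le_add hx hy

lemma wb_add_lt {x y : WithBot ℕ} {b c : ℕ} (hx : x ≤ (b : WithBot ℕ)) (hy : y < (c : WithBot ℕ)) :
    x + y < ((b + c : ℕ) : WithBot ℕ) := by
  rcases wb_le_coe_cases x with rfl | ⟨a, rfl⟩
  · rw [WithBot.bot_add]; exact_mod_cast WithBot.bot_lt_coe (b+c)
  · rcases wb_le_coe_cases y with rfl | ⟨a', rfl⟩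
    · rw [WithBot.add_bot]; exact_mod_cast WithBot.bot_lt_coe (b+c)
    · have hx' : a ≤ b := by exact_mod_cast hx
      have hy' : a' < c := by exact_mod_cast hy
      have : a + a' < b + c := by omega
      exact_mod_cast this

lemma wb_lt_coe_succ {x : WithBot ℕ} {k : ℕ} : x < ((k+1 : ℕ) : WithBot ℕ) ↔ x ≤ (k : WithBot ℕ) := by
  rcases wb_le_coe_cases x with rfl | ⟨a, rfl⟩
  · constructor
    · intro _; exact bot_le
    · intro _; exact_mod_cast WithBot.bot_lt_coe (k+1)
  · constructor
    · intro hxy; exact_mod_cast Nat.lt_succ_iff.mp (by exact_mod_cast hxy)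
    · intro hxy; exact_mod_cast Nat.lt_succ_iff.mpr (by exact_mod_cast hxy)

lemma wb_lt_coe_bot {k : ℕ} : (⊥ : WithBot ℕ) < (k : WithBot ℕ) := WithBot.bot_lt_coe k

lemma wb_add_lt_lt {x y : WithBot ℕ} {b c : ℕ} (hx : x < (b : WithBot ℕ)) (hy : y < (c : WithBot ℕ)) :
    x + y < ((b + c : ℕ) : WithBot ℕ) := by
  rcases wb_le_coe_cases x with rfl | ⟨a, rfl⟩
  · rw [WithBot.bot_add]; exact_mod_cast WithBot.bot_lt_coe (b+c)
  · rcases wb_le_coe_cases y with rfl | ⟨a', rfl⟩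
    · rw [WithBot.add_bot]; exact_mod_cast WithBot.bot_lt_coe (b+c)
    · have hx' : a < b := by exact_mod_cast hx
      have hy' : a' < c := by exact_mod_cast hy
      have : a + a' < b + c := by omega
      exact_mod_cast this

lemma wb_cancel_right {x : WithBot ℕ} {a b c : ℕ}
    (h : x + ((a + c : ℕ) : WithBot ℕ) < ((b + c : ℕ) : WithBot ℕ)) :
    x + (a : WithBot ℕ) < (b : WithBot ℕ) := by
  rcases wb_le_coe_cases x with rfl | ⟨e, rfl⟩
  · rw [WithBot.bot_add]; exact WithBot.bot_lt_coe b
  · have h' : e + (a + c) < b + c := by exact_mod_cast h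
    have : e + a < b := by omega
    exact_mod_cast this

end WB

section Deg
variable {R : Type*} [Ring R] [Nontrivial R] [NoZeroDivisors R]
  (degD : R → WithBot ℕ)
  (hbot : ∀ r : R, degD r = ⊥ ↔ r = 0)
  (hmul : ∀ r s : R, degD (r * s) = degD r + degD s)
  (hadd : ∀ r s : R, degD (r + s) ≤ max (degD r) (degD s))

include hbot hmul in
lemma deg_one : degD (1 : R) = 0 := by
  have h1 : degD (1 : R) ≠ ⊥ := by rw [Ne, hbot]; exact one_ne_zero
  rcases wb_le_coe_cases (degD (1 : R)) with he | ⟨a, he⟩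
  · exact absurd he h1
  · have h2 := hmul 1 1
    rw [one_mul, he] at h2
    have h3 : a = a + a := by exact_mod_cast h2
    have h4 : a = 0 := by omega
    rw [he, h4]; exact_mod_cast rfl

include hbot hmul in
lemma deg_neg (r : R) : degD (-r) = degD r := by
  have hm : degD (-1 : R) = 0 := by
    have h1 : degD (-1 : R) ≠ ⊥ := by rw [Ne, hbot]; simp
    rcases wb_le_coe_cases (degD (-1 : R)) with he | ⟨a, he⟩
    · exact absurd he h1
    · have h2 := hmul (-1) (-1)
      rw [neg_mul_neg, one_mul, deg_one degD hbot hmul, he] at h2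
      have h3 : (0 : ℕ) = a + a := by exact_mod_cast h2
      have h4 : a = 0 := by omega
      rw [he, h4]; exact_mod_cast rfl
  calc degD (-r) = degD ((-1) * r) := by rw [neg_one_mul]
  _ = degD r := by rw [hmul, hm, zero_add]

include hbot hmul hadd in
lemma deg_sub (r s : R) : degD (r - s) ≤ max (degD r) (degD s) := by
  rw [sub_eq_add_neg]
  exact le_trans (hadd r (-s)) (by rw [deg_neg degD hbot hmul])

omit [Nontrivial R] [NoZeroDivisors R] in
include hbot hadd in
lemma deg_sum_le {ι : Type*} (s : Finset ι) (f : ι → R) (c : WithBot ℕ)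
    (h : ∀ j ∈ s, degD (f j) ≤ c) : degD (∑ j ∈ s, f j) ≤ c := by
  classical
  induction s using Finset.induction_on with
  | empty => simp [(hbot 0).mpr rfl]
  | @insert a s ha ih =>
    rw [Finset.sum_insert ha]
    exact le_trans (hadd _ _) (max_le (h a (by simp)) (ih (fun j hj => h j (by simp [hj]))))

include hbot hmul in
lemma deg_pow (del : R) (hdel : degD del = ((1:ℕ) : WithBot ℕ)) (k : ℕ) :
    degD (del ^ k) = ((k : ℕ) : WithBot ℕ) := by
  induction k with
  | zero => rw [pow_zero, deg_one degD hbot hmul]; exact_mod_cast rfl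
  | succ m ih =>
    rw [pow_succ, hmul, ih, hdel]
    exact_mod_cast rfl

include hbot hmul hadd in
lemma deg_add_eq_left (r s : R) (h : degD s < degD r) : degD (r + s) = degD r := by
  apply le_antisymm (le_trans (hadd r s) (by simp [le_of_lt h]))
  have e : r = (r + s) + (-s) := (add_neg_cancel_right r s).symm
  have h2 : degD r ≤ max (degD (r + s)) (degD s) := by
    calc degD r = degD ((r + s) + (-s)) := by rw [← e]
    _ ≤ max (degD (r + s)) (degD (-s)) := hadd _ _
    _ = max (degD (r + s)) (degD s) := by rw [deg_neg degD hbot hmul]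
  rcases le_max_iff.mp h2 with h3 | h3
  · exact h3
  · exact absurd (lt_of_le_of_lt h3 h) (lt_irrefl _)

omit [Nontrivial R] [NoZeroDivisors R] in
include hbot hadd in
lemma deg_sum_lt {ι : Type*} (s : Finset ι) (f : ι → R) (c : WithBot ℕ) (hc : ⊥ < c)
    (h : ∀ j ∈ s, degD (f j) < c) : degD (∑ j ∈ s, f j) < c := by
  classical
  induction s using Finset.induction_on with
  | empty => simpa [(hbot 0).mpr rfl] using hc
  | @insert a s ha ih =>
    rw [Finset.sum_insert ha]
    exact lt_of_le_of_lt (hadd _ _)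
      (max_lt (h a (by simp)) (ih (fun j hj => h j (by simp [hj]))))

omit [Nontrivial R] [NoZeroDivisors R] in
include hbot in
lemma deg_zero_of_ne {r : R} (hle : degD r ≤ 0) (hne : r ≠ 0) : degD r = 0 := by
  rcases wb_le_coe_cases (degD r) with he | ⟨a, he⟩
  · exact absurd ((hbot r).mp he) hne
  · rw [he] at hle ⊢
    have h0 : a ≤ 0 := by exact_mod_cast hle
    have : a = 0 := by omega
    rw [this]; exact_mod_cast rfl

end Deg


section Main
variable {R : Type*} [Ring R] [Nontrivial R] [NoZeroDivisors R]
  (degD : R → WithBot ℕ)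
  (hbot : ∀ r : R, degD r = ⊥ ↔ r = 0)
  (hmul : ∀ r s : R, degD (r * s) = degD r + degD s)
  (hadd : ∀ r s : R, degD (r + s) ≤ max (degD r) (degD s))
  (hunit : ∀ r : R, degD r = 0 → IsUnit r)

include hbot hmul hadd hunit in
theorem inv_deg_bound (del : R) (hdel : degD del = ((1:ℕ) : WithBot ℕ))
    (hdivision : ∀ f g : R, g ≠ 0 → ∃ q rem : R, f = q * g + rem ∧ degD rem < degD g)
    {n e : ℕ} (Um Vm : Matrix (Fin n) (Fin n) R)
    (hUV : Um * Vm = 1) (hVU : Vm * Um = 1)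
    (hV : ∀ i j : Fin n, degD (Vm i j) ≤ ((e : ℕ) : WithBot ℕ)) :
    ∀ i j : Fin n, degD (Um i j) ≤ (((n-1) * e : ℕ) : WithBot ℕ) := by
  classical
  intro i j0
  have hdel0 : del ≠ 0 := by
    intro h; rw [h, (hbot 0).mpr rfl] at hdel; exact (by simp : ((⊥:WithBot ℕ) ≠ ((1:ℕ):WithBot ℕ))) hdel
  have hpowne : ∀ k : ℕ, del ^ k ≠ 0 := fun k => pow_ne_zero k hdel0
  -- the division subring F
  set F : Subring R := {
    carrier := {r | degD r ≤ 0}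
    mul_mem' := by
      intro a b ha hb
      simp only [Set.mem_setOf_eq] at *
      rw [hmul]; calc degD a + degD b ≤ 0 + 0 := add_le_add ha hb
      _ = 0 := by simp
    one_mem' := by simp only [Set.mem_setOf_eq]; rw [deg_one degD hbot hmul]
    add_mem' := by
      intro a b ha hb
      simp only [Set.mem_setOf_eq] at *
      exact le_trans (hadd a b) (max_le ha hb)
    zero_mem' := by simp only [Set.mem_setOf_eq]; rw [(hbot 0).mpr rfl]; exact bot_le
    neg_mem' := by
      intro a ha
      simp only [Set.mem_setOf_eq] at *
      calc degD (-a) = degD ((-1) * a) := by rw [neg_one_mul]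
      _ = degD (-1 : R) + degD a := hmul _ _
      _ ≤ 0 + 0 := by
          apply add_le_add _ ha
          rw [show ((-1 : R)) = -(1:R) by ring, deg_neg degD hbot hmul, deg_one degD hbot hmul]
      _ = 0 := by simp } with hF

  -- nontrivial F and division ring structure
  haveI : Nontrivial F := ⟨1, 0, fun hcon => one_ne_zero (congrArg Subtype.val hcon)⟩
  letI divF : DivisionRing F := DivisionRing.ofIsUnitOrEqZero (by
    intro a
    by_cases h0 : a = 0
    · exact Or.inr h0
    · left
      have hne : (a : R) ≠ 0 := fun hc => h0 (Subtype.ext hc)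
      have hdeg : degD (a : R) = 0 := deg_zero_of_ne degD hbot a.2 hne
      rcases hunit _ hdeg with ⟨w, hw⟩
      have hinvdeg : degD (w.inv : R) ≤ 0 := by
        have h1 : degD ((w.val : R) * w.inv) = 0 := by rw [w.val_inv]; exact deg_one degD hbot hmul
        rw [hmul, hw, hdeg] at h1
        rcases wb_le_coe_cases (degD (w.inv : R)) with he | ⟨b, he⟩
        · rw [he]; exact bot_le
        · rw [he] at h1 ⊢
          have : (0:ℕ) + b = 0 := by exact_mod_cast h1
          have hb : b = 0 := by omega
          rw [hb]; exact_mod_cast le_refl _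
      refine ⟨⟨a, ⟨w.inv, hinvdeg⟩, ?_, ?_⟩, rfl⟩
      · refine Subtype.ext ?_
        rw [MulMemClass.coe_mul, OneMemClass.coe_one]
        show (a:R) * w.inv = 1
        rw [show ((a:R)) = w.val from hw.symm]; exact w.val_inv
      · refine Subtype.ext ?_
        rw [MulMemClass.coe_mul, OneMemClass.coe_one]
        show (w.inv : R) * a = 1
        rw [show ((a:R)) = w.val from hw.symm]; exact w.inv_val)
  letI modF : Module F R := {
    smul := fun a r => (a : R) * r
    one_smul := fun r => by show ((1:F) : R) * r = r; rw [OneMemClass.coe_one, one_mul]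
    mul_smul := fun a b r => by
      show ((a*b : F) : R) * r = (a:R) * ((b:R) * r)
      rw [MulMemClass.coe_mul, mul_assoc]
    smul_zero := fun a => by show (a:R) * 0 = 0; rw [mul_zero]
    smul_add := fun a r s => by show (a:R) * (r + s) = (a:R)*r + (a:R)*s; rw [mul_add]
    add_smul := fun a b r => by
      show ((a+b : F) : R) * r = (a:R)*r + (b:R)*r
      rw [AddMemClass.coe_add, add_mul]
    zero_smul := fun r => by show ((0:F) : R) * r = 0; rw [ZeroMemClass.coe_zero, zero_mul] }
  have smul_def : ∀ (a : F) (r : R), a • r = (a : R) * r := fun a r => rfl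
  -- the submodules Mk
  have Mkmem : ∀ (k : ℕ) (a : F) (x : R), degD x ≤ (k : WithBot ℕ) →
      degD ((a:R) * x) ≤ (k : WithBot ℕ) := by
    intro k a x hx
    rw [hmul]
    calc degD (a:R) + degD x ≤ 0 + (k : WithBot ℕ) := add_le_add a.2 hx
    _ = (k : WithBot ℕ) := by rw [zero_add]
  let Mk : ℕ → Submodule F R := fun k => {
    carrier := {r | degD r ≤ (k : WithBot ℕ)}
    add_mem' := fun {x y} hx hy => le_trans (hadd x y) (max_le hx hy)
    zero_mem' := by show degD 0 ≤ _; rw [(hbot 0).mpr rfl]; exact bot_le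
    smul_mem' := fun a x hx => Mkmem _ a x hx }
  have Mk_coe : ∀ (k : ℕ) (x : Mk k), degD (x : R) ≤ (k : WithBot ℕ) := fun k x => x.2

  -- spanning: every element of degree ≤ k is an F-combination of powers of del
  have repr : ∀ (k : ℕ) (r : R), degD r ≤ (k : WithBot ℕ) →
      ∃ a : Fin (k+1) → F, r = ∑ j : Fin (k+1), (a j : R) * del ^ (j : ℕ) := by
    intro k
    induction k with
    | zero =>
      intro r hr
      refine ⟨fun _ => ⟨r, by exact_mod_cast hr⟩, ?_⟩
      rw [Fin.sum_univ_one]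
      simp
    | succ m ih =>
      intro r hr
      obtain ⟨q, rem, hqr, hrem⟩ := hdivision r (del ^ (m+1)) (hpowne (m+1))
      rw [deg_pow degD hbot hmul del hdel] at hrem
      have hremle : degD rem ≤ (m : WithBot ℕ) := wb_lt_coe_succ.mp hrem
      obtain ⟨a', ha'⟩ := ih rem hremle
      have hqdeg : degD q ≤ 0 := by
        have h1 : degD (q * del ^ (m+1)) = degD q + ((m+1 : ℕ) : WithBot ℕ) := by
          rw [hmul, deg_pow degD hbot hmul del hdel]
        have h2 : q * del ^ (m+1) = r + (-rem) := by
          rw [hqr]; exact (add_neg_cancel_right _ _).symm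
        have h3 : degD (q * del ^ (m+1)) ≤ ((m+1 : ℕ) : WithBot ℕ) := by
          rw [h2]
          refine le_trans (hadd r (-rem)) (max_le hr ?_)
          rw [deg_neg degD hbot hmul]
          exact le_trans hremle (by exact_mod_cast Nat.le_succ m)
        rw [h1] at h3
        have := wb_cancel h3
        simpa using this
      refine ⟨Fin.snoc a' ⟨q, hqdeg⟩, ?_⟩
      rw [Fin.sum_univ_castSucc]
      simp only [Fin.snoc_castSucc, Fin.snoc_last, Fin.val_last, Fin.coe_castSucc]
      rw [hqr, ha']
      exact add_comm _ _
  -- linear independence of powers of del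
  have lin_indep_R : ∀ (k : ℕ) (g : Fin (k+1) → F),
      (∑ j : Fin (k+1), (g j : R) * del ^ (j:ℕ)) = 0 → ∀ j, g j = 0 := by
    intro k g hsum
    by_contra hcon
    push_neg at hcon
    obtain ⟨j1, hj1⟩ := hcon
    have hSne : (Finset.univ.filter (fun j => g j ≠ 0)).Nonempty := ⟨j1, by simp [hj1]⟩
    set m := (Finset.univ.filter (fun j => g j ≠ 0)).max' hSne with hm
    have hmS : m ∈ Finset.univ.filter (fun j => g j ≠ 0) := Finset.max'_mem _ _
    have hgm : g m ≠ 0 := (Finset.mem_filter.mp hmS).2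
    have hgmdeg : degD ((g m : R)) = 0 :=
      deg_zero_of_ne degD hbot (g m).2 (fun hc => hgm (Subtype.ext hc))
    have hmain : degD ((g m : R) * del ^ (m:ℕ)) = ((m : ℕ) : WithBot ℕ) := by
      rw [hmul, hgmdeg, deg_pow degD hbot hmul del hdel, zero_add]
    have hrest : degD (∑ j ∈ Finset.univ.erase m, (g j : R) * del ^ (j:ℕ))
        < ((m : ℕ) : WithBot ℕ) := by
      apply deg_sum_lt degD hbot hadd _ _ _ (WithBot.bot_lt_coe _)
      intro j hj
      rcases Finset.mem_erase.mp hj with ⟨hjm, _⟩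
      by_cases hgj : g j = 0
      · rw [hgj]
        show degD (((0 : F) : R) * _) < _
        rw [ZeroMemClass.coe_zero, zero_mul, (hbot 0).mpr rfl]
        exact WithBot.bot_lt_coe _
      · have hjS : j ∈ Finset.univ.filter (fun j => g j ≠ 0) := by simp [hgj]
        have hjle : j ≤ m := Finset.le_max' _ j hjS
        have hjlt : (j : ℕ) < (m : ℕ) :=
          lt_of_le_of_ne (by exact_mod_cast hjle) (fun hc => hjm (Fin.ext hc))
        rw [hmul, deg_pow degD hbot hmul del hdel]
        calc degD ((g j : R)) + ((j:ℕ) : WithBot ℕ) ≤ 0 + ((j:ℕ) : WithBot ℕ) :=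
          add_le_add (g j).2 (le_refl _)
        _ = ((j:ℕ) : WithBot ℕ) := by rw [zero_add]
        _ < ((m:ℕ) : WithBot ℕ) := by exact_mod_cast hjlt
    have htot : degD (∑ j : Fin (k+1), (g j : R) * del ^ (j:ℕ)) = ((m:ℕ) : WithBot ℕ) := by
      rw [← Finset.add_sum_erase _ _ (Finset.mem_univ m)]
      rw [deg_add_eq_left degD hbot hmul hadd _ _ (by rw [hmain]; exact hrest), hmain]
    rw [hsum, (hbot 0).mpr rfl] at htot
    exact (by simp : ((⊥:WithBot ℕ) ≠ ((m:ℕ):WithBot ℕ))) htot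
  -- basis of Mk k
  have vmem : ∀ (k : ℕ) (j : Fin (k+1)), del ^ (j:ℕ) ∈ Mk k := by
    intro k j
    show degD (del ^ (j:ℕ)) ≤ _
    rw [deg_pow degD hbot hmul del hdel]
    have h9 : (j:ℕ) ≤ k := Nat.le_of_lt_succ j.isLt
    exact_mod_cast h9
  have bk : ∀ k : ℕ, Module.Basis (Fin (k+1)) F (Mk k) := by
    intro k
    refine Module.Basis.mk (v := fun (j : Fin (k+1)) => (⟨del ^ (j.val), vmem k j⟩ : Mk k)) ?_ ?_
    · apply LinearIndependent.of_comp (Mk k).subtype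
      rw [Fintype.linearIndependent_iff]
      intro g hg
      apply lin_indep_R k g
      have : ∑ j : Fin (k+1), g j • (del ^ (j:ℕ)) = 0 := hg
      simpa [smul_def] using this
    · rintro ⟨x, hx⟩ -
      obtain ⟨a, ha⟩ := repr k x hx
      have hxeq : (⟨x, hx⟩ : Mk k) = ∑ j : Fin (k+1), a j • (⟨del ^ (j.val), vmem k j⟩ : Mk k) := by
        apply Subtype.ext
        show x = ((∑ j : Fin (k+1), a j • (⟨del ^ (j.val), vmem k j⟩ : Mk k) : Mk k) : R)
        rw [ha, AddSubmonoidClass.coe_finset_sum]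
        exact Finset.sum_congr rfl (fun j _ => rfl)
      rw [hxeq]
      exact Submodule.sum_mem _ (fun j _ =>
        Submodule.smul_mem _ _ (Submodule.subset_span ⟨j, rfl⟩))
  haveI hfd : ∀ k : ℕ, FiniteDimensional F (Mk k) := fun k => Module.Finite.of_basis (bk k)
  have hfr : ∀ k : ℕ, Module.finrank F (Mk k) = k + 1 := by
    intro k
    rw [Module.finrank_eq_card_basis (bk k), Fintype.card_fin]

  -- the row u of Um
  set u : Fin n → R := fun k => Um i k with hu
  have hrowV : ∀ j : Fin n, (∑ k, u k * Vm k j) = if i = j then 1 else 0 := by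
    intro j
    have h1 := congrFun (congrFun hUV i) j
    rw [Matrix.mul_apply] at h1
    rw [h1, Matrix.one_apply]
  have hne : ∃ k, u k ≠ 0 := by
    by_contra hall
    push_neg at hall
    have h0 := hrowV i
    rw [if_pos rfl] at h0
    have h2 : (∑ k, u k * Vm k i) = 0 :=
      Finset.sum_eq_zero (fun k _ => by rw [hall k, zero_mul])
    exact one_ne_zero (h0.symm.trans h2)
  set Dm := Finset.univ.sup (fun k => degD (u k)) with hDm
  have hDmne : Dm ≠ ⊥ := by
    obtain ⟨k1, hk1⟩ := hne
    intro hbotD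
    have h3 : degD (u k1) ≤ ⊥ := hbotD ▸ Finset.le_sup (f := fun k => degD (u k)) (Finset.mem_univ k1)
    exact hk1 ((hbot _).mp (le_bot_iff.mp h3))
  obtain ⟨δ, hδ⟩ : ∃ δ : ℕ, Dm = (δ : WithBot ℕ) := by
    rcases wb_le_coe_cases Dm with h | h
    · exact absurd h hDmne
    · exact h
  obtain ⟨k0, -, hk0⟩ := Finset.exists_mem_eq_sup Finset.univ
    ⟨i, Finset.mem_univ i⟩ (fun k => degD (u k))
  have hk0' : degD (u k0) = (δ : WithBot ℕ) := by rw [← hk0, ← hDm, hδ]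
  -- the linear map Ψ
  have memY : ∀ (s : Fin n → Mk δ) (j : Fin n), (∑ k, ((s k : R) * Vm k j)) ∈ Mk (δ + e) := by
    intro s j
    show degD _ ≤ _
    apply deg_sum_le degD hbot hadd
    intro k _
    rw [hmul]
    exact wb_add_le (s k).2 (hV k j)
  let Ψ : (Fin n → Mk δ) →ₗ[F] ({ j : Fin n // j ≠ i } → Mk (δ + e)) := {
    toFun := fun s jj => ⟨∑ k, (s k : R) * Vm k jj.1, memY s jj.1⟩
    map_add' := fun s t => by
      funext jj
      apply Subtype.ext
      show (∑ k, (((s + t) k : Mk δ) : R) * Vm k jj.1)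
        = (∑ k, ((s k : R)) * Vm k jj.1) + (∑ k, ((t k : R)) * Vm k jj.1)
      rw [← Finset.sum_add_distrib]
      apply Finset.sum_congr rfl
      intro k _
      show (((s k + t k : Mk δ)) : R) * Vm k jj.1 = _
      rw [Submodule.coe_add, add_mul]
    map_smul' := fun a s => by
      funext jj
      apply Subtype.ext
      show (∑ k, (((a • s) k : Mk δ) : R) * Vm k jj.1)
        = (a : R) * (∑ k, ((s k : R)) * Vm k jj.1)
      rw [Finset.mul_sum]
      apply Finset.sum_congr rfl
      intro k _
      show (((a • (s k) : Mk δ)) : R) * Vm k jj.1 = (a : R) * ((s k : R) * Vm k jj.1)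
      rw [Submodule.coe_smul, smul_def, mul_assoc] }
  have hΨapply : ∀ (s : Fin n → Mk δ) (jj : { j : Fin n // j ≠ i }),
      ((Ψ s jj : Mk (δ + e)) : R) = ∑ k, (s k : R) * Vm k jj.1 := fun s jj => rfl
  -- reconstruction of kernel elements
  have hrec : ∀ (s : Fin n → Mk δ), (∀ j, j ≠ i → (∑ k, (s k : R) * Vm k j) = 0) →
      ∀ l, (s l : R) = (∑ k, (s k : R) * Vm k i) * u l := by
    intro s hs l
    have h1 : (s l : R) = ∑ m, (s m : R) * (Vm * Um) m l := by
      rw [hVU]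
      rw [Finset.sum_eq_single l]
      · rw [Matrix.one_apply_eq, mul_one]
      · intro m _ hml
        rw [Matrix.one_apply_ne hml, mul_zero]
      · intro habs
        exact absurd (Finset.mem_univ l) habs
    have h2 : ∑ m, (s m : R) * (Vm * Um) m l
        = ∑ p, (∑ m, (s m : R) * Vm m p) * Um p l := by
      simp only [Matrix.mul_apply, Finset.mul_sum, Finset.sum_mul]
      rw [Finset.sum_comm]
      apply Finset.sum_congr rfl
      intro p _
      apply Finset.sum_congr rfl
      intro m _
      rw [mul_assoc]
    rw [h1, h2]
    rw [Finset.sum_eq_single i]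
    · intro p _ hpi
      rw [hs p hpi, zero_mul]
    · intro habs
      exact absurd (Finset.mem_univ i) habs
  have hkerprop : ∀ s : LinearMap.ker Ψ, ∀ j, j ≠ i → (∑ k, ((s : Fin n → Mk δ) k : R) * Vm k j) = 0 := by
    intro s j hj
    have h1 : Ψ s.1 = 0 := s.2
    have h2 := congrFun h1 ⟨j, hj⟩
    have h3 := congrArg (Subtype.val) h2
    rw [hΨapply] at h3
    exact h3
  -- the map from ker Ψ to Mk 0
  have hwdeg : ∀ s : LinearMap.ker Ψ, degD (∑ k, ((s : Fin n → Mk δ) k : R) * Vm k i) ≤ (0 : ℕ) := by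
    intro s
    set w := ∑ k, ((s : Fin n → Mk δ) k : R) * Vm k i with hw
    by_cases hw0 : w = 0
    · rw [hw0, (hbot 0).mpr rfl]; exact bot_le
    · have h1 := hrec s.1 (hkerprop s) k0
      have h2 : degD ((s : Fin n → Mk δ) k0 : R) ≤ (δ : WithBot ℕ) := ((s : Fin n → Mk δ) k0).2
      rw [h1, hmul, hk0'] at h2
      have h3 := wb_cancel h2
      simpa using h3
  let Λ : LinearMap.ker Ψ →ₗ[F] Mk 0 := {
    toFun := fun s => ⟨∑ k, ((s : Fin n → Mk δ) k : R) * Vm k i, by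
      have := hwdeg s
      exact this⟩
    map_add' := fun s t => by
      apply Subtype.ext
      show (∑ k, (((s : Fin n → Mk δ) k : R) + ((t : Fin n → Mk δ) k : R)) * Vm k i)
        = (∑ k, ((s : Fin n → Mk δ) k : R) * Vm k i) + (∑ k, ((t : Fin n → Mk δ) k : R) * Vm k i)
      rw [← Finset.sum_add_distrib]
      exact Finset.sum_congr rfl (fun k _ => add_mul _ _ _)
    map_smul' := fun a s => by
      apply Subtype.ext
      show (∑ k, ((a : R) * ((s : Fin n → Mk δ) k : R)) * Vm k i)
        = (a : R) * (∑ k, ((s : Fin n → Mk δ) k : R) * Vm k i)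
      rw [Finset.mul_sum]
      exact Finset.sum_congr rfl (fun k _ => mul_assoc _ _ _) }
  have hΛinj : Function.Injective Λ := by
    intro s t hst
    have h1 : (∑ k, ((s : Fin n → Mk δ) k : R) * Vm k i)
        = (∑ k, ((t : Fin n → Mk δ) k : R) * Vm k i) := congrArg Subtype.val hst
    apply Subtype.ext
    funext l
    apply Subtype.ext
    rw [hrec s.1 (hkerprop s) l, hrec t.1 (hkerprop t) l, h1]
  -- dimension counting
  haveI hfdX : FiniteDimensional F (Fin n → Mk δ) := by infer_instance
  haveI hfdY : FiniteDimensional F ({ j : Fin n // j ≠ i } → Mk (δ + e)) := by infer_instance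
  have hX : Module.finrank F (Fin n → Mk δ) = n * (δ + 1) := by
    rw [Module.finrank_pi_fintype]
    rw [Finset.sum_const, Finset.card_univ, Fintype.card_fin, hfr δ, smul_eq_mul]
  have hcard : Fintype.card { j : Fin n // j ≠ i } = n - 1 := by
    have := Fintype.card_subtype_compl (fun j : Fin n => j = i)
    rw [Fintype.card_subtype_eq, Fintype.card_fin] at this
    exact this
  have hY : Module.finrank F ({ j : Fin n // j ≠ i } → Mk (δ + e)) = (n-1) * (δ + e + 1) := by
    rw [Module.finrank_pi_fintype]
    rw [Finset.sum_const, Finset.card_univ, hcard, hfr (δ + e), smul_eq_mul]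
  have hrn := LinearMap.finrank_range_add_finrank_ker Ψ
  have hrle : Module.finrank F (LinearMap.range Ψ) ≤ (n-1) * (δ + e + 1) :=
    le_trans (Submodule.finrank_le _) (le_of_eq hY)
  have hkle : Module.finrank F (LinearMap.ker Ψ) ≤ 1 := by
    have := LinearMap.finrank_le_finrank_of_injective hΛinj
    rw [hfr 0] at this
    exact this
  have hineq : n * (δ + 1) ≤ (n-1) * (δ + e + 1) + 1 := by
    rw [← hX, ← hrn]
    omega
  have hn1 : 1 ≤ n := i.pos
  have hδle : δ ≤ (n-1) * e := by
    rcases Nat.exists_eq_add_of_le hn1 with ⟨m, hm⟩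
    subst hm
    simp only [Nat.add_sub_cancel_left] at hineq ⊢
    nlinarith
  have hfin : degD (u j0) ≤ Dm := Finset.le_sup (f := fun k => degD (u k)) (Finset.mem_univ j0)
  rw [hδ] at hfin
  calc degD (Um i j0) = degD (u j0) := rfl
  _ ≤ (δ : WithBot ℕ) := hfin
  _ ≤ (((n-1) * e : ℕ) : WithBot ℕ) := by exact_mod_cast hδle


include hbot hmul hadd in
theorem Vdeg {n : ℕ} (d : ℕ) (Vm Hm Am : Matrix (Fin n) (Fin n) R)
    (hVH : Vm * Hm = Am)
    (hHut : ∀ i j : Fin n, j < i → Hm i j = 0)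
    (hHdeg : ∀ i j : Fin n, i < j → degD (Hm i j) < degD (Hm j j))
    (h' : Fin n → ℕ)
    (hh : ∀ i : Fin n, degD (Hm i i) = ((h' i : ℕ) : WithBot ℕ))
    (hA : ∀ i j : Fin n, degD (Am i j) ≤ ((d : ℕ) : WithBot ℕ)) :
    ∀ i j : Fin n, degD (Vm i j) ≤ ((d : ℕ) : WithBot ℕ) := by
  classical
  have main : ∀ jv : ℕ, ∀ hjv : jv < n, ∀ i, degD (Vm i ⟨jv, hjv⟩) ≤ ((d:ℕ) : WithBot ℕ) := by
    intro jv
    induction jv using Nat.strong_induction_on with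
    | _ jv ih =>
      intro hjv i
      set j : Fin n := ⟨jv, hjv⟩ with hj
      have hsplit : Vm i j * Hm j j = Am i j - ∑ m ∈ Finset.univ.erase j, Vm i m * Hm m j := by
        have h1 : Am i j = ∑ m, Vm i m * Hm m j := by
          rw [← hVH, Matrix.mul_apply]
        rw [h1, ← Finset.add_sum_erase _ (fun m => Vm i m * Hm m j) (Finset.mem_univ j)]
        rw [add_sub_cancel_right]
      -- bound each erased term
      have hterm : ∀ m ∈ Finset.univ.erase j, m ≠ j ∧
          (j < m → Vm i m * Hm m j = 0) := by
        intro m hm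
        exact ⟨(Finset.mem_erase.mp hm).1, fun hlt => by rw [hHut m j hlt, mul_zero]⟩
      rcases Nat.eq_zero_or_pos (h' j) with hz | hpos
      · -- all off-diagonal entries in column j vanish
        have hsum0 : (∑ m ∈ Finset.univ.erase j, Vm i m * Hm m j) = 0 := by
          apply Finset.sum_eq_zero
          intro m hm
          rcases lt_or_gt_of_ne ((Finset.mem_erase.mp hm).1) with hlt | hgt
          · have := hHdeg m j hlt
            rw [hh j, hz] at this
            have hH0 : Hm m j = 0 := by
              apply (hbot _).mp
              rcases wb_le_coe_cases (degD (Hm m j)) with hbb | ⟨a, ha⟩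
              · exact hbb
              · rw [ha] at this
                exfalso
                have : a < 0 := by exact_mod_cast this
                omega
            rw [hH0, mul_zero]
          · rw [hHut m j hgt, mul_zero]
        have heq : Vm i j * Hm j j = Am i j := by rw [hsplit, hsum0, sub_zero]
        have hdeg : degD (Vm i j) + ((h' j : ℕ) : WithBot ℕ) ≤ ((d:ℕ) : WithBot ℕ) := by
          rw [← hh j, ← hmul, heq]; exact hA i j
        rw [hz] at hdeg
        have := wb_cancel hdeg
        simpa using this
      · obtain ⟨hjm, hjme⟩ : ∃ hjm, h' j = hjm + 1 := ⟨h' j - 1, by omega⟩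

        have hbound : degD (Am i j - ∑ m ∈ Finset.univ.erase j, Vm i m * Hm m j)
            ≤ ((d + hjm : ℕ) : WithBot ℕ) := by
          apply le_trans (deg_sub degD hbot hmul hadd _ _)
          apply max_le
          · exact le_trans (hA i j) (by exact_mod_cast Nat.le_add_right d hjm)
          · apply deg_sum_le degD hbot hadd
            intro m hm
            rcases lt_or_gt_of_ne ((Finset.mem_erase.mp hm).1) with hlt | hgt
            · have hHle : degD (Hm m j) ≤ ((hjm : ℕ) : WithBot ℕ) := by
                apply wb_lt_coe_succ.mp
                have := hHdeg m j hlt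
                rw [hh j, hjme] at this
                exact_mod_cast this
              have hVle : degD (Vm i m) ≤ ((d:ℕ) : WithBot ℕ) := by
                have hmj : (m : ℕ) < jv := hlt
                have := ih (m : ℕ) hmj m.isLt i
                simpa using this
              rw [hmul]
              exact wb_add_le hVle hHle
            · rw [hHut m j hgt, mul_zero, (hbot 0).mpr rfl]
              exact bot_le
        have hdeg : degD (Vm i j) + ((hjm + 1 : ℕ) : WithBot ℕ) ≤ ((d + hjm : ℕ) : WithBot ℕ) := by
          rw [← hjme, ← hh j, ← hmul, hsplit]
          exact hbound
        have h2 := wb_cancel hdeg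
        refine le_trans h2 ?_
        have : d + hjm - (hjm + 1) ≤ d := by omega
        exact_mod_cast this
  intro i j
  have := main (j : ℕ) j.isLt i
  simpa using this

end Main

/-- (Existence part of the degree-constraint system.)
With `A ∈ R^{n×n}` of full left row rank, `degD A_{ij} ≤ d`, Hermite form
`H = U·A` with diagonal degrees `h_i = degD H_{ii}`: if `d_i ≥ h_i` for all
`i` and `R` contains an element `∂` of degree `1`, then the system (2) has a
solution `T` (i.e. `(T·A)_{ii}` is nonzero of degree `d_i` and
`degD (T·A)_{ij} < d_j` for `i ≠ j`), with
`degD T_{ij} ≤ (n−1)·d + max_i (d_i − h_i)`. -/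
theorem stmt13
    {R : Type*} [Ring R] [Nontrivial R] [NoZeroDivisors R]
    (degD : R → WithBot ℕ)
    (hbot : ∀ r : R, degD r = ⊥ ↔ r = 0)
    (hmul : ∀ r s : R, degD (r * s) = degD r + degD s)
    (hadd : ∀ r s : R, degD (r + s) ≤ max (degD r) (degD s))
    (hunit : ∀ r : R, degD r = 0 → IsUnit r)
    (hdivision : ∀ f g : R, g ≠ 0 → ∃ q rem : R, f = q * g + rem ∧ degD rem < degD g)
    {n : ℕ} (d : ℕ) (A U H : Matrix (Fin n) (Fin n) R)
    (hrank : ∀ b : Fin n → R, Matrix.vecMul b A = 0 → b = 0)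
    (hAd : ∀ i j : Fin n, degD (A i j) ≤ ((d : ℕ) : WithBot ℕ))
    (hUuni : ∃ V : Matrix (Fin n) (Fin n) R, U * V = 1 ∧ V * U = 1)
    (hHut : ∀ i j : Fin n, j < i → H i j = 0)
    (hHdiag : ∀ i : Fin n, H i i ≠ 0)
    (hHdeg : ∀ i j : Fin n, i < j → degD (H i j) < degD (H j j))
    (hUA : U * A = H)
    (h dvec : Fin n → ℕ)
    (hh : ∀ i : Fin n, degD (H i i) = ((h i : ℕ) : WithBot ℕ))
    (hge : ∀ i : Fin n, h i ≤ dvec i)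
    (hpartial : ∃ del : R, degD del = ((1 : ℕ) : WithBot ℕ)) :
    ∃ T : Matrix (Fin n) (Fin n) R,
      (∀ i : Fin n, (T * A) i i ≠ 0 ∧ degD ((T * A) i i) = ((dvec i : ℕ) : WithBot ℕ)) ∧
      (∀ i j : Fin n, i ≠ j → degD ((T * A) i j) < ((dvec j : ℕ) : WithBot ℕ)) ∧
      (∀ i j : Fin n, degD (T i j) ≤
        (((n - 1) * d + Finset.univ.sup (fun i : Fin n => dvec i - h i) : ℕ) : WithBot ℕ)) := by
  classical
  obtain ⟨del, hdel⟩ := hpartial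
  obtain ⟨V, hUV, hVU⟩ := hUuni
  have hdel0 : del ≠ 0 := by
    intro hcon
    rw [hcon, (hbot 0).mpr rfl] at hdel
    exact (by simp : ((⊥:WithBot ℕ) ≠ ((1:ℕ):WithBot ℕ))) hdel
  have hpowne : ∀ k : ℕ, del ^ k ≠ 0 := fun k => pow_ne_zero k hdel0
  have hVH : V * H = A := by rw [← hUA, ← Matrix.mul_assoc, hVU, Matrix.one_mul]
  have hVd : ∀ i j, degD (V i j) ≤ ((d:ℕ) : WithBot ℕ) :=
    Vdeg degD hbot hmul hadd d V H A hVH hHut hHdeg h hh hAd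
  have hUd : ∀ i j, degD (U i j) ≤ (((n-1)*d : ℕ) : WithBot ℕ) :=
    inv_deg_bound degD hbot hmul hadd hunit del hdel hdivision U V hUV hVU hVd
  set estar := Finset.univ.sup (fun i : Fin n => dvec i - h i) with hestar
  set ee : Fin n → ℕ := fun j => dvec j - h j with hee
  have heed : ∀ j, ee j + h j = dvec j := fun j => by
    have := hge j; simp only [hee]; omega
  have heele : ∀ j, ee j ≤ estar := fun j =>
    Finset.le_sup (f := fun i : Fin n => dvec i - h i) (Finset.mem_univ j)
  set G : Fin n → Fin n → R := fun j k => del ^ (ee j) * H j k with hG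
  have hGlow : ∀ j k : Fin n, k < j → G j k = 0 := by
    intro j k hkj; simp only [hG]; rw [hHut j k hkj, mul_zero]
  have hGdiagdeg : ∀ j, degD (G j j) = ((dvec j : ℕ) : WithBot ℕ) := by
    intro j
    simp only [hG]
    rw [hmul, deg_pow degD hbot hmul del hdel, hh j, ← heed j]
    exact_mod_cast rfl
  have hGdiagne : ∀ j, G j j ≠ 0 := by
    intro j hcon
    have h1 := hGdiagdeg j
    rw [hcon, (hbot 0).mpr rfl] at h1
    exact (by simp : ((⊥:WithBot ℕ) ≠ ((dvec j:ℕ):WithBot ℕ))) h1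
  have hGup : ∀ j k : Fin n, j < k → degD (G j k) < ((estar + h k : ℕ) : WithBot ℕ) := by
    intro j k hjk
    simp only [hG]
    rw [hmul, deg_pow degD hbot hmul del hdel]
    apply wb_add_lt
    · exact_mod_cast heele j
    · rw [← hh k] at *
      exact hHdeg j k hjk

  -- the column reduction process
  have red : ∀ i : Fin n, ∀ m : ℕ, ∃ c : Fin n → R,
      c i = 1 ∧
      (∀ j, j ≠ i → ¬ i < j → c j = 0) ∧
      (∀ j, j ≠ i → m ≤ (j:ℕ) → c j = 0) ∧
      (∀ j, j ≠ i → degD (c j) + ((dvec j : ℕ) : WithBot ℕ) < ((estar + h j : ℕ) : WithBot ℕ)) ∧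
      (∀ k, i < k → degD (∑ j, c j * G j k) < ((estar + h k : ℕ) : WithBot ℕ)) ∧
      (∀ k, i < k → (k:ℕ) < m → degD (∑ j, c j * G j k) < ((dvec k : ℕ) : WithBot ℕ)) := by
    intro i m
    induction m with
    | zero =>
      refine ⟨fun j => if j = i then 1 else 0, if_pos rfl, ?_, ?_, ?_, ?_, ?_⟩
      · intro j hj _; exact if_neg hj
      · intro j hj _; exact if_neg hj
      · intro j hj
        show degD (if j = i then (1:R) else 0) + _ < _
        rw [if_neg hj, (hbot 0).mpr rfl, WithBot.bot_add]
        exact WithBot.bot_lt_coe _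
      · intro k hik
        have hsum : (∑ j, (if j = i then (1:R) else 0) * G j k) = G i k := by
          rw [Finset.sum_eq_single i]
          · rw [if_pos rfl, one_mul]
          · intro b _ hbi; rw [if_neg hbi, zero_mul]
          · intro habs; exact absurd (Finset.mem_univ i) habs
        rw [hsum]
        exact hGup i k hik
      · intro k _ hk0; omega
    | succ m ihm =>
      obtain ⟨c, hc1, hc2, hc3, hc4, hc5, hc6⟩ := ihm
      by_cases hmn : m < n
      · set js : Fin n := ⟨m, hmn⟩ with hjs
        by_cases hij : i < js
        · obtain ⟨q, rem, hqrem, hremdeg⟩ :=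
            hdivision (∑ j, c j * G j js) (G js js) (hGdiagne js)
          rw [hGdiagdeg js] at hremdeg
          have hjsi : js ≠ i := (ne_of_gt hij)
          have hcjs : c js = 0 := hc3 js hjsi (le_refl m)
          set c' : Fin n → R := fun j => if j = js then -q else c j with hc'
          have hsum' : ∀ k, (∑ j, c' j * G j k) = (∑ j, c j * G j k) + (-q) * G js k := by
            intro k
            rw [← Finset.add_sum_erase _ (fun j => c' j * G j k) (Finset.mem_univ js)]
            rw [← Finset.add_sum_erase _ (fun j => c j * G j k) (Finset.mem_univ js)]
            have h1 : c' js = -q := if_pos rfl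
            have h2 : ∀ j ∈ Finset.univ.erase js, c' j * G j k = c j * G j k := by
              intro j hj
              show (if j = js then -q else c j) * G j k = c j * G j k
              rw [if_neg (Finset.mem_erase.mp hj).1]
            rw [h1, hcjs, zero_mul, zero_add, Finset.sum_congr rfl h2]
            exact add_comm _ _
          have hqdeg : degD q + ((dvec js : ℕ) : WithBot ℕ) < ((estar + h js : ℕ) : WithBot ℕ) := by
            have h1 : q * G js js = (∑ j, c j * G j js) - rem := by
              rw [hqrem]; exact (add_sub_cancel_right _ _).symm
            have h2 : degD (q * G js js) < ((estar + h js : ℕ) : WithBot ℕ) := by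
              rw [h1]
              apply lt_of_le_of_lt (deg_sub degD hbot hmul hadd _ _)
              apply max_lt (hc5 js hij)
              apply lt_of_lt_of_le hremdeg
              have hle9 : dvec js ≤ estar + h js := by
                have := heele js; have := heed js; omega
              exact_mod_cast hle9
            rw [hmul, hGdiagdeg js] at h2
            exact h2
          have hqee : degD q + ((ee js : ℕ) : WithBot ℕ) < ((estar : ℕ) : WithBot ℕ) := by
            apply wb_cancel_right (c := h js)
            rw [show ee js + h js = dvec js from heed js]
            exact hqdeg
          refine ⟨c', ?_, ?_, ?_, ?_, ?_, ?_⟩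
          · have hne9 : i ≠ js := fun hcon => hjsi hcon.symm
            show (if i = js then -q else c i) = 1
            rw [if_neg hne9, hc1]
          · intro j hj hnij
            have hne9 : j ≠ js := fun hcon => hnij (by rw [hcon]; exact hij)
            show (if j = js then -q else c j) = 0
            rw [if_neg hne9, hc2 j hj hnij]
          · intro j hj hm1
            have hne9 : j ≠ js := by
              intro hcon
              rw [hcon] at hm1
              exact Nat.not_succ_le_self m hm1
            show (if j = js then -q else c j) = 0
            rw [if_neg hne9, hc3 j hj (by omega)]
          · intro j hj
            show degD (if j = js then -q else c j) + _ < _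
            by_cases hjjs : j = js
            · rw [if_pos hjjs, deg_neg degD hbot hmul, hjjs]
              exact hqdeg
            · rw [if_neg hjjs]
              exact hc4 j hj
          · intro k hik
            rw [hsum' k]
            rcases lt_trichotomy k js with hkjs | hkjs | hkjs
            · rw [hGlow js k hkjs, mul_zero, add_zero]
              exact hc5 k hik
            · rw [hkjs]
              have hfin : (∑ j, c j * G j js) + -q * G js js = rem := by
                rw [neg_mul, hqrem]; abel
              rw [hfin]
              apply lt_of_lt_of_le hremdeg
              have hle9 : dvec js ≤ estar + h js := by
                have := heele js; have := heed js; omega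
              exact_mod_cast hle9
            · have hterm : degD (-q * G js k) < ((estar + h k : ℕ) : WithBot ℕ) := by
                rw [hmul, deg_neg degD hbot hmul]
                simp only [hG]
                rw [hmul, deg_pow degD hbot hmul del hdel, ← add_assoc]
                apply wb_add_lt_lt hqee
                rw [← hh k]
                exact hHdeg js k hkjs
              calc degD ((∑ j, c j * G j k) + -q * G js k)
                  ≤ max (degD (∑ j, c j * G j k)) (degD (-q * G js k)) := hadd _ _
                _ < ((estar + h k : ℕ) : WithBot ℕ) := max_lt (hc5 k hik) hterm
          · intro k hik hkm
            rw [hsum' k]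
            rcases lt_trichotomy k js with hkjs | hkjs | hkjs
            · rw [hGlow js k hkjs, mul_zero, add_zero]
              exact hc6 k hik (by
                have h9 : (k:ℕ) < m := hkjs
                exact h9)
            · rw [hkjs]
              have hfin : (∑ j, c j * G j js) + -q * G js js = rem := by
                rw [neg_mul, hqrem]; abel
              rw [hfin]
              exact hremdeg
            · exfalso
              have h9 : m < (k:ℕ) := hkjs
              omega
        · refine ⟨c, hc1, hc2, fun j hj hm1 => hc3 j hj (by omega), hc4, hc5, ?_⟩
          intro k hik hkm
          rcases Nat.lt_or_ge (k:ℕ) m with hkm' | hkm'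
          · exact hc6 k hik hkm'
          · exfalso
            have hkeq : (k:ℕ) = m := by omega
            have h9 : k = js := Fin.ext hkeq
            rw [h9] at hik
            exact hij hik
      · refine ⟨c, hc1, hc2, fun j hj hm1 => hc3 j hj (by omega), hc4, hc5, ?_⟩
        intro k hik hkm
        exact hc6 k hik (by have := k.isLt; omega)
  -- assemble T
  choose c hcc using (fun i => red i n)
  set T : Matrix (Fin n) (Fin n) R :=
    Matrix.of (fun i l => ∑ j, c i j * (del ^ (ee j) * U j l)) with hT
  have hTA : ∀ i k, (T * A) i k = ∑ j, c i j * G j k := by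
    intro i k
    rw [Matrix.mul_apply]
    have step1 : ∀ l, T i l * A l k = ∑ j, c i j * (del ^ (ee j) * U j l) * A l k := by
      intro l
      show (∑ j, c i j * (del ^ (ee j) * U j l)) * A l k = _
      exact Finset.sum_mul _ _ _
    rw [Finset.sum_congr rfl (fun l _ => step1 l), Finset.sum_comm]
    apply Finset.sum_congr rfl
    intro j _
    have step2 : ∀ l, c i j * (del ^ (ee j) * U j l) * A l k
        = c i j * (del ^ (ee j) * (U j l * A l k)) := by
      intro l
      rw [mul_assoc, mul_assoc]
    rw [Finset.sum_congr rfl (fun l _ => step2 l), ← Finset.mul_sum, ← Finset.mul_sum]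
    rw [← Matrix.mul_apply, hUA]
  have hxi : ∀ i, (∑ j, c i j * G j i) = G i i := by
    intro i
    rw [Finset.sum_eq_single i]
    · rw [(hcc i).1, one_mul]
    · intro b _ hbi
      rcases lt_or_gt_of_ne hbi with hlt | hgt
      · rw [(hcc i).2.1 b hbi (not_lt_of_gt hlt), zero_mul]
      · rw [hGlow b i hgt, mul_zero]
    · intro habs; exact absurd (Finset.mem_univ i) habs
  refine ⟨T, ?_, ?_, ?_⟩
  · intro i
    rw [hTA i i, hxi i]
    exact ⟨hGdiagne i, hGdiagdeg i⟩
  · intro i k hik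
    rw [hTA i k]
    rcases lt_trichotomy i k with hlt | heq | hgt
    · exact (hcc i).2.2.2.2.2 k hlt k.isLt
    · exact absurd heq hik
    · have hzero : (∑ j, c i j * G j k) = 0 := by
        apply Finset.sum_eq_zero
        intro j _
        rcases lt_trichotomy j i with hji | hji | hji
        · rw [(hcc i).2.1 j (ne_of_lt hji) (not_lt_of_gt hji), zero_mul]
        · subst hji
          rw [hGlow j k hgt, mul_zero]
        · rw [hGlow j k (lt_trans hgt hji), mul_zero]
      rw [hzero, (hbot 0).mpr rfl]
      exact WithBot.bot_lt_coe _
  · intro i l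
    show degD (∑ j, c i j * (del ^ (ee j) * U j l)) ≤ _
    apply deg_sum_le degD hbot hadd
    intro j _
    rcases lt_trichotomy j i with hji | hji | hji
    · rw [(hcc i).2.1 j (ne_of_lt hji) (not_lt_of_gt hji), zero_mul, (hbot 0).mpr rfl]
      exact bot_le
    · subst hji
      rw [(hcc j).1, one_mul, hmul, deg_pow degD hbot hmul del hdel]
      have h1 : degD (U j l) ≤ (((n-1)*d : ℕ) : WithBot ℕ) := hUd j l
      have h2 := wb_add_le (le_refl ((ee j : ℕ) : WithBot ℕ)) h1
      apply le_trans h2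
      have h3 : ee j + (n-1)*d ≤ (n-1)*d + estar := by
        have := heele j; omega
      exact_mod_cast h3
    · have hstep : degD (c i j) + ((ee j : ℕ) : WithBot ℕ) < ((estar : ℕ) : WithBot ℕ) := by
        apply wb_cancel_right (c := h j)
        rw [show ee j + h j = dvec j from heed j]
        exact (hcc i).2.2.2.1 j (ne_of_gt hji)
      rw [hmul, hmul, deg_pow degD hbot hmul del hdel, ← add_assoc]
      have h2 := wb_add_le (le_of_lt hstep) (hUd j l)
      apply le_trans h2
      have h3 : estar + (n-1)*d ≤ (n-1)*d + estar := by omega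
      exact_mod_cast h3
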